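/- For every k ∈ {1,…,n}, the derivative of the function z ↦ det(z·1 − L̃) at the point z = λ_k equals m · λ_k^{m−1} · ∏_{ℓ≠k} (λ_k^m − λ_ℓ^m). -/

import Mathlib

open Matrix BigOperators

noncomputable section

open Equiv Equiv.Perm

lemma shift_perm_eq (m : ℕ) (hm : 1 < m) (σ : Equiv.Perm (ZMod m))
    (H : ∀ i, σ i = i ∨ σ i = i - 1) :
    σ = 1 ∨ σ = Equiv.addRight (-1 : ZMod m) := by
  haveI : NeZero m := ⟨by omega⟩
  haveI : Fact (1 < m) := ⟨hm⟩
  have hne : ∀ x : ZMod m, x - 1 ≠ x := by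
    intro x h
    have h1 : (1 : ZMod m) = 0 := by
      have := sub_eq_self.mp h
      simpa using this
    exact one_ne_zero h1
  by_cases h1 : ∀ i, σ i = i
  · left; ext i; simp [h1]
  · right
    push_neg at h1
    obtain ⟨i₀, hi₀⟩ := h1
    have hi₀' : σ i₀ = i₀ - 1 := (H i₀).resolve_left hi₀
    have key : ∀ t : ℕ, σ (i₀ - t) = i₀ - t - 1 := by
      intro t; induction t with
      | zero => simpa using hi₀'
      | succ t ih =>
        have h2 := H (i₀ - t - 1)
        have hstep : σ (i₀ - t - 1) = i₀ - t - 1 - 1 := by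
          rcases h2 with h2 | h2
          · exfalso
            have := σ.injective (h2.trans ih.symm)
            exact hne _ this
          · exact h2
        have hcast : (i₀ - ((t : ℕ) + 1 : ℕ) : ZMod m) = i₀ - t - 1 := by
          push_cast; ring
        rw [hcast, hstep]
    ext x
    have hx : x = i₀ - ((i₀ - x).val : ZMod m) := by
      rw [ZMod.natCast_val, ZMod.cast_id]; ring
    have := key (i₀ - x).val
    rw [← hx] at this
    simp only [Equiv.coe_addRight]
    rw [this]; ring

lemma pow_shift (m : ℕ) (t : ℕ) :
    ((Equiv.addRight (-1 : ZMod m)) ^ t) 0 = -(t : ZMod m) := by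
  induction t with
  | zero => simp
  | succ t ih =>
    rw [pow_succ', Equiv.Perm.mul_apply, ih]
    simp only [Equiv.coe_addRight]
    push_cast; ring

lemma det_cyclic (m : ℕ) [NeZero m] (a z : ℂ) :
    (z • (1 : Matrix (ZMod m) (ZMod m) ℂ) -
      Matrix.of (fun h i : ZMod m => if i = h + 1 then a else 0)).det
      = z ^ m - a ^ m := by
  rcases eq_or_lt_of_le (Nat.one_le_iff_ne_zero.mpr (NeZero.ne m)) with hm | hm
  · -- m = 1
    subst hm
    rw [Matrix.det_unique]
    have : (default : ZMod 1) = default + 1 := Subsingleton.elim _ _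
    simp [Matrix.one_apply, ← this]
    intro h; exact absurd (Subsingleton.elim _ _) h
  · haveI : Fact (1 < m) := ⟨hm⟩
    have hne : ∀ x : ZMod m, x - 1 ≠ x := by
      intro x h
      have h1 : (1 : ZMod m) = 0 := by
        have := sub_eq_self.mp h
        simpa using this
      exact one_ne_zero h1
    set c : Equiv.Perm (ZMod m) := Equiv.addRight (-1) with hcdef
    have hc_apply : ∀ x : ZMod m, c x = x - 1 := by
      intro x; simp [hcdef, sub_eq_add_neg]
    -- c is a cycle
    have hcyc : c.IsCycle := by
      refine ⟨0, ?_, ?_⟩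
      · rw [hc_apply]; exact hne 0
      · intro y hy
        refine ⟨(((-y).val : ℕ) : ℤ), ?_⟩
        rw [zpow_natCast, hcdef, pow_shift, ZMod.natCast_val, ZMod.cast_id, neg_neg]
    have hsupp : c.support = Finset.univ := by
      ext x
      simp only [Equiv.Perm.mem_support, Finset.mem_univ, iff_true]
      rw [hc_apply]; exact hne x
    have hsign : Equiv.Perm.sign c = -(-1) ^ m := by
      rw [hcyc.sign, hsupp]
      congr 1
      rw [Finset.card_univ, ZMod.card]
    have h1c : (1 : Equiv.Perm (ZMod m)) ≠ c := by
      intro h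
      have := congrArg (fun σ : Equiv.Perm (ZMod m) => σ 0) h
      simp only [Equiv.Perm.one_apply] at this
      rw [hc_apply] at this
      exact hne 0 this.symm
    rw [Matrix.det_apply]
    rw [← Finset.sum_subset (Finset.subset_univ ({1, c} : Finset (Equiv.Perm (ZMod m))))]
    · rw [Finset.sum_pair h1c]
      have hid : ∏ i : ZMod m, (z • (1 : Matrix (ZMod m) (ZMod m) ℂ) -
          Matrix.of (fun h i : ZMod m => if i = h + 1 then a else 0)) ((1 : Equiv.Perm (ZMod m)) i) i = z ^ m := by
        rw [show (z : ℂ) ^ m = ∏ _i : ZMod m, z by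
          rw [Finset.prod_const, Finset.card_univ, ZMod.card]]
        refine Finset.prod_congr rfl fun i _ => ?_
        have : i ≠ i + 1 := fun h => one_ne_zero (left_eq_add.mp h)
        simp [Matrix.one_apply, this]
      have hcp : ∏ i : ZMod m, (z • (1 : Matrix (ZMod m) (ZMod m) ℂ) -
          Matrix.of (fun h i : ZMod m => if i = h + 1 then a else 0)) (c i) i = (-a) ^ m := by
        rw [show ((-a) : ℂ) ^ m = ∏ _i : ZMod m, (-a) by
          rw [Finset.prod_const, Finset.card_univ, ZMod.card]]
        refine Finset.prod_congr rfl fun i _ => ?_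
        rw [hc_apply]
        have h1 : i - 1 ≠ i := hne i
        have h2 : i = (i - 1) + 1 := by ring
        simp [Matrix.one_apply, h1, ← h2]
      rw [hid, hcp, hsign, Equiv.Perm.sign_one, one_smul, Units.smul_def, zsmul_eq_mul]
      push_cast
      rcases Nat.even_or_odd m with he | ho
      · rw [he.neg_pow (1:ℂ), he.neg_pow a]; ring
      · rw [ho.neg_pow (1:ℂ), ho.neg_pow a]; ring
    · intro σ _ hσ
      simp only [Finset.mem_insert, Finset.mem_singleton, not_or] at hσ
      have : ¬ (∀ i, σ i = i ∨ σ i = i - 1) := by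
        intro H
        rcases shift_perm_eq m hm σ H with h | h
        · exact hσ.1 h
        · exact hσ.2 h
      push_neg at this
      obtain ⟨i, hi1, hi2⟩ := this
      have hfac : (z • (1 : Matrix (ZMod m) (ZMod m) ℂ) -
          Matrix.of (fun h i : ZMod m => if i = h + 1 then a else 0)) (σ i) i = 0 := by
        have h3 : i ≠ σ i + 1 := fun h => hi2 (eq_sub_of_add_eq h.symm)
        simp [Matrix.one_apply, hi1, h3, Ne.symm hi1]
      have hprod : (∏ j : ZMod m, (z • (1 : Matrix (ZMod m) (ZMod m) ℂ) -
          Matrix.of (fun h i : ZMod m => if i = h + 1 then a else 0)) (σ j) j) = 0 :=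
        Finset.prod_eq_zero (Finset.mem_univ i) hfac
      rw [hprod, smul_zero]


/-- The block matrix `L̃` with diagonal blocks `Λ = diag(λ₁,…,λₙ)` at positions `(h, h+1)`:
its entry in row `(h,j)` and column `(i,k)` is `λⱼ` if `k = j` and `i = h + 1` in `ℤ/mℤ`,
and `0` otherwise. -/
def Ltilde (m n : ℕ) (lam : Fin n → ℂ) :
    Matrix (ZMod m × Fin n) (ZMod m × Fin n) ℂ :=
  Matrix.of fun p q => if q.2 = p.2 ∧ q.1 = p.1 + 1 then lam p.2 else 0

/-- The derivative of `z ↦ det(z·1 − L̃)` at `z = λₖ` equals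
`m · λₖ^{m−1} · ∏_{ℓ≠k} (λₖ^m − λ_ℓ^m)`. -/
theorem deriv_charpoly_at_eigenvalue (m n : ℕ) [NeZero m] (hn : 0 < n)
    (lam : Fin n → ℂ) (k : Fin n) :
    deriv (fun z : ℂ =>
        (z • (1 : Matrix (ZMod m × Fin n) (ZMod m × Fin n) ℂ) - Ltilde m n lam).det)
      (lam k) =
      (m : ℂ) * lam k ^ (m - 1) * ∏ l ∈ Finset.univ.erase k, (lam k ^ m - lam l ^ m) := by
  have hL : Ltilde m n lam = Matrix.blockDiagonal (fun j : Fin n =>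
      Matrix.of fun h i : ZMod m => if i = h + 1 then lam j else 0) := by
    ext ⟨h, j⟩ ⟨i, k'⟩
    simp only [Ltilde, Matrix.blockDiagonal_apply, Matrix.of_apply]
    by_cases hjk : k' = j
    · subst hjk; simp
    · simp [hjk, Ne.symm hjk]
  have hdet : ∀ z : ℂ, (z • (1 : Matrix (ZMod m × Fin n) (ZMod m × Fin n) ℂ)
      - Ltilde m n lam).det = ∏ j : Fin n, (z ^ m - lam j ^ m) := by
    intro z
    rw [hL, ← Matrix.blockDiagonal_one, ← Matrix.blockDiagonal_smul,
        ← Matrix.blockDiagonal_sub, Matrix.det_blockDiagonal]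
    exact Finset.prod_congr rfl fun j _ => det_cyclic m (lam j) z
  have hfun : (fun z : ℂ =>
      (z • (1 : Matrix (ZMod m × Fin n) (ZMod m × Fin n) ℂ) - Ltilde m n lam).det)
      = fun z => (z ^ m - lam k ^ m) * ∏ l ∈ Finset.univ.erase k, (z ^ m - lam l ^ m) := by
    funext z
    rw [hdet z, ← Finset.mul_prod_erase _ _ (Finset.mem_univ k)]
  rw [hfun]
  have hf : DifferentiableAt ℂ (fun z : ℂ => z ^ m - lam k ^ m) (lam k) :=
    (differentiableAt_pow m).sub_const _
  have hg : DifferentiableAt ℂ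
      (fun z : ℂ => ∏ l ∈ Finset.univ.erase k, (z ^ m - lam l ^ m)) (lam k) := by
    apply DifferentiableAt.fun_finsetProd
    intro l _
    exact (differentiableAt_pow m).sub_const _
  rw [deriv_fun_mul hf hg]
  have h1 : deriv (fun z : ℂ => z ^ m - lam k ^ m) (lam k) = m * lam k ^ (m - 1) := by
    rw [deriv_sub_const, deriv_pow_field]
  rw [h1]
  simp [mul_assoc]
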